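/- arXiv:2602.04879 — 3 statements merged into one kernel-verified Lean document; each statement's English description precedes it below -/
import Mathlib

section
/- (Performance Difference Identity for LLMs) Let μ and π be two policies over sequences of fixed length T on a finite alphabet, with μ(y_t|s_t) > 0 for all reachable prefixes, and let R be a bounded reward function on sequences. Then J(π) − J(μ) = L'(π) − Δ(μ,π), where J(π) = E_{y∼π}[R(y)], L'(π) = E_{y∼μ}[ R(y) Σ_{t=1}^T ( π(y_t|s_t)/μ(y_t|s_t) − 1 ) ], and Δ(μ,π) = E_{y∼μ}[ R(y) Σ_{t=1}^T ( π(y_t|s_t)/μ(y_t|s_t) − 1 )( 1 − Π_{j=t+1}^T π(y_j|s_j)/μ(y_j|s_j) ) ]. -/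
open Finset

/-- A policy assigns to each prefix (a list of tokens) a probability
distribution over the finite alphabet `A`. -/
def IsPolicy {A : Type*} [Fintype A] (p : List A → A → ℝ) : Prop :=
  ∀ s : List A, (∀ a, 0 ≤ p s a) ∧ ∑ a, p s a = 1

/-- The probability of a (partial) sequence: the product of the per-step
conditional probabilities, conditioning on the preceding prefix. -/
def seqProb {A : Type*} [Fintype A] (p : List A → A → ℝ) {n : ℕ} (y : Fin n → A) : ℝ :=
  ∏ t : Fin n, p ((List.ofFn y).take t.val) (y t)

lemma telescope_aux (T : ℕ) (f : Fin T → ℝ) :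
    ∑ t : Fin T, (f t - 1) * ∏ j ∈ Finset.Ioi t, f j = (∏ t, f t) - 1 := by
  set g : ℕ → ℝ := fun k => ∏ j ∈ Finset.univ.filter (fun j : Fin T => k ≤ j.val), f j with hg
  have hIoi : ∀ t : Fin T, (∏ j ∈ Finset.Ioi t, f j) = g (t.val + 1) := by
    intro t
    apply Finset.prod_congr _ (fun _ _ => rfl)
    ext j
    simp only [Finset.mem_Ioi, Finset.mem_filter, Finset.mem_univ, true_and, Fin.lt_def]
    omega
  have hstep : ∀ t : Fin T, g t.val = f t * g (t.val + 1) := by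
    intro t
    have : Finset.univ.filter (fun j : Fin T => t.val ≤ j.val)
        = insert t (Finset.univ.filter (fun j : Fin T => t.val + 1 ≤ j.val)) := by
      ext j
      simp only [Finset.mem_filter, Finset.mem_insert, Finset.mem_univ, true_and]
      constructor
      · intro h
        rcases eq_or_lt_of_le h with h | h
        · left; exact (Fin.ext h.symm)
        · right; exact h
      · rintro (rfl | h); · exact le_refl _
        · omega
    rw [hg]
    simp only [this]
    rw [Finset.prod_insert (by simp)]
  have key : ∀ t : Fin T, (f t - 1) * ∏ j ∈ Finset.Ioi t, f j = g t.val - g (t.val + 1) := by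
    intro t
    rw [hIoi, sub_mul, one_mul, ← hstep]
  rw [Finset.sum_congr rfl (fun t _ => key t)]
  have := Fin.sum_univ_eq_sum_range (fun k => g k - g (k + 1)) T
  rw [this, Finset.sum_range_sub' g T]
  have h0 : g 0 = ∏ t, f t := by
    apply Finset.prod_congr _ (fun _ _ => rfl)
    ext j; simp
  have hT : g T = 1 := by
    have he : Finset.univ.filter (fun j : Fin T => T ≤ j.val) = ∅ := by
      ext j
      simp only [Finset.mem_filter, Finset.mem_univ, true_and, Finset.notMem_empty, iff_false,
        not_le]
      exact j.isLt
    rw [hg]; simp only [he, Finset.prod_empty]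
  rw [h0, hT]


/-- Performance Difference Identity for LLMs:
`J(π) − J(μ) = L'(π) − Δ(μ, π)`. -/
theorem performance_difference_identity_llm
    {A : Type*} [Fintype A] (T : ℕ) (μ π : List A → A → ℝ) (R : (Fin T → A) → ℝ)
    (hμ : IsPolicy μ) (hπ : IsPolicy π)
    (hμpos : ∀ (s : List A) (a : A), 0 < μ s a) :
    (∑ y : Fin T → A, seqProb π y * R y) - (∑ y : Fin T → A, seqProb μ y * R y) =
      (∑ y : Fin T → A, seqProb μ y * (R y * ∑ t : Fin T,
          (π ((List.ofFn y).take t.val) (y t) / μ ((List.ofFn y).take t.val) (y t) - 1)))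
      - (∑ y : Fin T → A, seqProb μ y * (R y * ∑ t : Fin T,
          (π ((List.ofFn y).take t.val) (y t) / μ ((List.ofFn y).take t.val) (y t) - 1) *
            (1 - ∏ j ∈ Finset.Ioi t,
              π ((List.ofFn y).take j.val) (y j) / μ ((List.ofFn y).take j.val) (y j)))) := by
  rw [← Finset.sum_sub_distrib, ← Finset.sum_sub_distrib]
  apply Finset.sum_congr rfl
  intro y _
  set ρ : Fin T → ℝ := fun t =>
    π ((List.ofFn y).take t.val) (y t) / μ ((List.ofFn y).take t.val) (y t) with hρ
  have hprod : seqProb μ y * ∏ t, ρ t = seqProb π y := by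
    rw [seqProb, seqProb, ← Finset.prod_mul_distrib]
    apply Finset.prod_congr rfl
    intro t _
    rw [hρ]
    exact mul_div_cancel₀ _ (hμpos _ _).ne'
  have hS : (∑ t : Fin T, (ρ t - 1)) - (∑ t : Fin T, (ρ t - 1) * (1 - ∏ j ∈ Finset.Ioi t, ρ j))
      = (∏ t, ρ t) - 1 := by
    rw [← Finset.sum_sub_distrib, ← telescope_aux T ρ]
    apply Finset.sum_congr rfl
    intro t _
    ring
  calc seqProb π y * R y - seqProb μ y * R y
      = seqProb μ y * R y * ((∏ t, ρ t) - 1) := by rw [← hprod]; ring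
    _ = seqProb μ y * R y * ((∑ t : Fin T, (ρ t - 1))
          - (∑ t : Fin T, (ρ t - 1) * (1 - ∏ j ∈ Finset.Ioi t, ρ j))) := by rw [hS]
    _ = _ := by ring
end

section
/- (Policy Improvement Bound for LLMs) Let μ and π be two policies over sequences of fixed length T on a finite alphabet, with μ strictly positive on each conditional. Let R be a reward function with ξ = max_y |R(y)|, and let δ = max over all prefixes s of D_TV(μ(·|s) ‖ π(·|s)). Then J(π) − J(μ) ≥ L'(π) − 2ξ T(T−1) δ², where J(π) = E_{y∼π}[R(y)] and L'(π) = E_{y∼μ}[ R(y) Σ_{t=1}^T ( π(y_t|s_t)/μ(y_t|s_t) − 1 ) ]. -/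
open Finset

set_option linter.unusedSectionVars false

namespace PIB

variable {A : Type*} [Fintype A]

lemma sum_cons' {n : ℕ} (F : (Fin (n+1) → A) → ℝ) :
    ∑ y, F y = ∑ a, ∑ z : Fin n → A, F (Fin.cons a z) := by
  rw [← (Fin.consEquiv (fun _ => A)).sum_comp F, Fintype.sum_prod_type]
  rfl

def sp (p : List A → A → ℝ) (s : List A) {n : ℕ} (y : Fin n → A) : ℝ :=
  ∏ t : Fin n, p (s ++ (List.ofFn y).take t.val) (y t)

lemma take_cons {n : ℕ} (s : List A) (a : A) (z : Fin n → A) (t : Fin n) :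
    s ++ (List.ofFn (Fin.cons a z)).take t.succ.val = (s ++ [a]) ++ (List.ofFn z).take t.val := by
  simp [List.ofFn_succ]

lemma sp_cons (p : List A → A → ℝ) (s : List A) {n : ℕ} (a : A) (z : Fin n → A) :
    sp p s (Fin.cons a z) = p s a * sp p (s ++ [a]) z := by
  unfold sp
  rw [Fin.prod_univ_succ]
  congr 1
  · simp
  · exact Finset.prod_congr rfl fun t _ => by rw [take_cons]; simp

lemma sum_sp (p : List A → A → ℝ) (hp : IsPolicy p) :
    ∀ (n : ℕ) (s : List A), ∑ y : Fin n → A, sp p s y = 1 := by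
  intro n
  induction n with
  | zero => intro s; simp [sp]
  | succ n ih =>
    intro s
    rw [sum_cons' (sp p s)]
    simp only [sp_cons, ← Finset.mul_sum, ih]
    simpa using (hp s).2

lemma sp_nonneg (p : List A → A → ℝ) (hp : IsPolicy p) (s : List A) {n : ℕ} (y : Fin n → A) :
    0 ≤ sp p s y :=
  Finset.prod_nonneg fun t _ => (hp _).1 _

section Main

variable (μ π : List A → A → ℝ) (δ : ℝ)
  (hμ : IsPolicy μ) (hπ : IsPolicy π)
  (hμpos : ∀ (s : List A) (a : A), 0 < μ s a)
  (hδ : ∀ s : List A, (1 / 2) * ∑ a, |μ s a - π s a| ≤ δ)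

/-- the per-step likelihood ratio deviation -/
noncomputable def b (s : List A) {n : ℕ} (y : Fin n → A) (t : Fin n) : ℝ :=
  π (s ++ (List.ofFn y).take t.val) (y t) / μ (s ++ (List.ofFn y).take t.val) (y t) - 1

include hδ in
lemma tv_bound (s : List A) : ∑ a, |π s a - μ s a| ≤ 2 * δ := by
  have h := hδ s
  have : ∑ a, |π s a - μ s a| = ∑ a, |μ s a - π s a| := by
    exact Finset.sum_congr rfl fun a _ => abs_sub_comm _ _
  rw [this]; linarith

include hδ in
lemma delta_nonneg : 0 ≤ δ := by
  have h := hδ []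
  have : 0 ≤ ∑ a, |μ [] a - π [] a| := Finset.sum_nonneg fun a _ => abs_nonneg _
  linarith

include hμ hμpos hδ in
lemma L4 : ∀ (n : ℕ) (s : List A) (t : Fin n),
    ∑ z : Fin n → A, sp μ s z * |b μ π s z t| ≤ 2 * δ := by
  intro n
  induction n with
  | zero => intro s t; exact t.elim0
  | succ n ih =>
    intro s t
    rw [sum_cons' (fun z => sp μ s z * |b μ π s z t|)]
    refine Fin.cases ?_ ?_ t
    · -- t = 0
      have : ∀ a : A, ∑ z : Fin n → A, sp μ s (Fin.cons a z) * |b μ π s (Fin.cons a z) 0|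
          = |π s a - μ s a| := by
        intro a
        have hb : b μ π s (Fin.cons (n := n) a (fun z => a)) 0 = π s a / μ s a - 1 := by
          simp [b]
        have : ∀ z : Fin n → A, sp μ s (Fin.cons a z) * |b μ π s (Fin.cons a z) 0|
            = |π s a - μ s a| * sp μ (s ++ [a]) z := by
          intro z
          have hb' : b μ π s (Fin.cons a z) 0 = π s a / μ s a - 1 := by simp [b]
          have hpos := hμpos s a
          have key : μ s a * |π s a / μ s a - 1| = |π s a - μ s a| := by
            have h1 : π s a / μ s a - 1 = (π s a - μ s a) / μ s a := by field_simp
            rw [h1, abs_div, abs_of_pos hpos]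
            field_simp
          rw [hb', sp_cons, mul_comm (μ s a) (sp μ (s ++ [a]) z), mul_assoc, key,
            mul_comm]
        rw [Finset.sum_congr rfl fun z _ => this z, ← Finset.mul_sum,
          sum_sp μ hμ n (s ++ [a]), mul_one]
      rw [Finset.sum_congr rfl fun a _ => this a]
      exact tv_bound μ π δ hδ s
    · -- t = succ t'
      intro t'
      have : ∀ a : A, ∑ z : Fin n → A, sp μ s (Fin.cons a z) * |b μ π s (Fin.cons a z) t'.succ|
          = μ s a * ∑ z : Fin n → A, sp μ (s ++ [a]) z * |b μ π (s ++ [a]) z t'| := by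
        intro a
        rw [Finset.mul_sum]
        refine Finset.sum_congr rfl fun z _ => ?_
        have hb : b μ π s (Fin.cons a z) t'.succ = b μ π (s ++ [a]) z t' := by
          simp only [b, take_cons, Fin.cons_succ]
        rw [hb, sp_cons]; ring
      rw [Finset.sum_congr rfl fun a _ => this a]
      calc ∑ a, μ s a * ∑ z : Fin n → A, sp μ (s ++ [a]) z * |b μ π (s ++ [a]) z t'|
          ≤ ∑ a, μ s a * (2 * δ) := by
            refine Finset.sum_le_sum fun a _ => ?_
            exact mul_le_mul_of_nonneg_left (ih (s ++ [a]) t') ((hμ s).1 a)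
        _ = 2 * δ := by rw [← Finset.sum_mul, (hμ s).2, one_mul]


include hμ hπ hμpos hδ in
lemma keyLemma (ξ : ℝ) (hξ0 : 0 ≤ ξ) :
    ∀ (n : ℕ) (s : List A) (R : (Fin n → A) → ℝ), (∀ y, |R y| ≤ ξ) →
    |∑ y : Fin n → A, R y * (sp π s y - sp μ s y - sp μ s y * ∑ t, b μ π s y t)|
      ≤ 2 * ξ * n * (n - 1) * δ ^ 2 := by
  intro n
  induction n with
  | zero =>
    intro s R hR
    have h : ∑ y : Fin 0 → A, R y * (sp π s y - sp μ s y - sp μ s y * ∑ t : Fin 0, b μ π s y t)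
        = 0 := Finset.sum_eq_zero fun y _ => by simp [sp]
    rw [h, abs_zero]
    norm_num
  | succ n ih =>
    intro s R hR
    have hδ0 : 0 ≤ δ := delta_nonneg μ π δ hδ
    rw [sum_cons' (fun y => R y * (sp π s y - sp μ s y - sp μ s y * ∑ t, b μ π s y t))]
    have expand : ∀ (a : A) (z : Fin n → A),
        R (Fin.cons a z) * (sp π s (Fin.cons a z) - sp μ s (Fin.cons a z)
          - sp μ s (Fin.cons a z) * ∑ t, b μ π s (Fin.cons a z) t)
        = π s a * (R (Fin.cons a z) * (sp π (s ++ [a]) z - sp μ (s ++ [a]) z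
            - sp μ (s ++ [a]) z * ∑ t, b μ π (s ++ [a]) z t))
          + (π s a - μ s a) * (R (Fin.cons a z)
            * (sp μ (s ++ [a]) z * ∑ t, b μ π (s ++ [a]) z t)) := by
      intro a z
      have hb0 : b μ π s (Fin.cons a z) 0 = π s a / μ s a - 1 := by simp [b]
      have hbs : ∀ t : Fin n, b μ π s (Fin.cons a z) t.succ = b μ π (s ++ [a]) z t :=
        fun t => by simp only [b, take_cons, Fin.cons_succ]
      have h0 : μ s a ≠ 0 := (hμpos s a).ne'
      have hμa : μ s a * (π s a / μ s a - 1) = π s a - μ s a := by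
        field_simp
      rw [sp_cons, sp_cons, Fin.sum_univ_succ, hb0,
        Finset.sum_congr rfl (fun t _ => hbs t)]
      linear_combination (-(R (Fin.cons a z) * sp μ (s ++ [a]) z)) * hμa
    have hD : ∀ (a : A), |∑ z : Fin n → A, R (Fin.cons a z)
        * (sp μ (s ++ [a]) z * ∑ t, b μ π (s ++ [a]) z t)| ≤ ξ * (n * (2 * δ)) := by
      intro a
      calc |∑ z : Fin n → A, R (Fin.cons a z)
            * (sp μ (s ++ [a]) z * ∑ t, b μ π (s ++ [a]) z t)|
          ≤ ∑ z : Fin n → A, |R (Fin.cons a z)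
            * (sp μ (s ++ [a]) z * ∑ t, b μ π (s ++ [a]) z t)| :=
            Finset.abs_sum_le_sum_abs _ _
        _ ≤ ∑ z : Fin n → A, ξ * (sp μ (s ++ [a]) z * ∑ t, |b μ π (s ++ [a]) z t|) := by
            refine Finset.sum_le_sum fun z _ => ?_
            rw [abs_mul, abs_mul]
            have h1 : |sp μ (s ++ [a]) z| = sp μ (s ++ [a]) z :=
              abs_of_nonneg (sp_nonneg μ hμ _ z)
            rw [h1]
            refine mul_le_mul (hR _) (mul_le_mul_of_nonneg_left
              (Finset.abs_sum_le_sum_abs _ _) (sp_nonneg μ hμ _ z))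
              (mul_nonneg (sp_nonneg μ hμ _ z) (abs_nonneg _)) hξ0
        _ = ξ * ∑ t : Fin n, ∑ z : Fin n → A, sp μ (s ++ [a]) z * |b μ π (s ++ [a]) z t| := by
            rw [← Finset.mul_sum]
            congr 1
            simp only [Finset.mul_sum]
            rw [Finset.sum_comm]
        _ ≤ ξ * ∑ _t : Fin n, 2 * δ := by
            refine mul_le_mul_of_nonneg_left (Finset.sum_le_sum fun t _ => ?_) hξ0
            exact L4 μ π δ hμ hμpos hδ n (s ++ [a]) t
        _ = ξ * (n * (2 * δ)) := by simp [mul_comm]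
    have step : ∀ a : A, |∑ z : Fin n → A, R (Fin.cons a z) * (sp π s (Fin.cons a z)
        - sp μ s (Fin.cons a z) - sp μ s (Fin.cons a z) * ∑ t, b μ π s (Fin.cons a z) t)|
        ≤ π s a * (2 * ξ * n * (n - 1) * δ ^ 2) + |π s a - μ s a| * (ξ * (n * (2 * δ))) := by
      intro a
      rw [Finset.sum_congr rfl fun z _ => expand a z, Finset.sum_add_distrib,
        ← Finset.mul_sum, ← Finset.mul_sum]
      calc |π s a * (∑ z : Fin n → A, R (Fin.cons a z) * (sp π (s ++ [a]) z
              - sp μ (s ++ [a]) z - sp μ (s ++ [a]) z * ∑ t, b μ π (s ++ [a]) z t))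
            + (π s a - μ s a) * ∑ z : Fin n → A, R (Fin.cons a z)
              * (sp μ (s ++ [a]) z * ∑ t, b μ π (s ++ [a]) z t)|
          ≤ |π s a * _| + |(π s a - μ s a) * _| := abs_add_le _ _
        _ ≤ π s a * (2 * ξ * n * (n - 1) * δ ^ 2) + |π s a - μ s a| * (ξ * (n * (2 * δ))) := by
            rw [abs_mul, abs_mul, abs_of_nonneg ((hπ s).1 a)]
            exact add_le_add
              (mul_le_mul_of_nonneg_left (ih (s ++ [a]) (fun z => R (Fin.cons a z))
                (fun z => hR _)) ((hπ s).1 a))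
              (mul_le_mul_of_nonneg_left (hD a) (abs_nonneg _))
    calc |∑ a, ∑ z : Fin n → A, R (Fin.cons a z) * (sp π s (Fin.cons a z)
          - sp μ s (Fin.cons a z) - sp μ s (Fin.cons a z) * ∑ t, b μ π s (Fin.cons a z) t)|
        ≤ ∑ a, |∑ z : Fin n → A, R (Fin.cons a z) * (sp π s (Fin.cons a z)
          - sp μ s (Fin.cons a z) - sp μ s (Fin.cons a z) * ∑ t, b μ π s (Fin.cons a z) t)| :=
          Finset.abs_sum_le_sum_abs _ _
      _ ≤ ∑ a, (π s a * (2 * ξ * n * (n - 1) * δ ^ 2)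
            + |π s a - μ s a| * (ξ * (n * (2 * δ)))) :=
          Finset.sum_le_sum fun a _ => step a
      _ = (2 * ξ * n * (n - 1) * δ ^ 2) + (∑ a, |π s a - μ s a|) * (ξ * (n * (2 * δ))) := by
          rw [Finset.sum_add_distrib, ← Finset.sum_mul, ← Finset.sum_mul, (hπ s).2, one_mul]
      _ ≤ (2 * ξ * n * (n - 1) * δ ^ 2) + (2 * δ) * (ξ * (n * (2 * δ))) := by
          have hδ0 : 0 ≤ δ := delta_nonneg μ π δ hδ
          have h2 : 0 ≤ ξ * (n * (2 * δ)) := by positivity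
          exact add_le_add_right (mul_le_mul_of_nonneg_right (tv_bound μ π δ hδ s) h2) _
      _ = 2 * ξ * (n + 1 : ℕ) * ((n + 1 : ℕ) - 1) * δ ^ 2 := by
          push_cast
          ring

end Main

end PIB

/-- Policy Improvement Bound for LLMs:
`J(π) − J(μ) ≥ L'(π) − 2ξT(T−1)δ²`, where ξ bounds |R| and δ bounds all
single-step conditional TV divergences. -/
theorem policy_improvement_bound_llm
    {A : Type*} [Fintype A] [Nonempty A] (T : ℕ) (μ π : List A → A → ℝ)
    (R : (Fin T → A) → ℝ) (ξ δ : ℝ)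
    (hμ : IsPolicy μ) (hπ : IsPolicy π)
    (hμpos : ∀ (s : List A) (a : A), 0 < μ s a)
    (hξ : ∀ y : Fin T → A, |R y| ≤ ξ)
    (hδ : ∀ s : List A, (1 / 2) * ∑ a, |μ s a - π s a| ≤ δ) :
    (∑ y : Fin T → A, seqProb π y * R y) - (∑ y : Fin T → A, seqProb μ y * R y) ≥
      (∑ y : Fin T → A, seqProb μ y * (R y * ∑ t : Fin T,
          (π ((List.ofFn y).take t.val) (y t) / μ ((List.ofFn y).take t.val) (y t) - 1)))
      - 2 * ξ * T * (T - 1) * δ ^ 2 := by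
  classical
  have hξ0 : 0 ≤ ξ := le_trans (abs_nonneg _) (hξ (fun _ => Classical.arbitrary A))
  have hkey := PIB.keyLemma μ π δ hμ hπ hμpos hδ ξ hξ0 T [] R hξ
  have heq : (∑ y : Fin T → A, seqProb π y * R y) - (∑ y : Fin T → A, seqProb μ y * R y)
      - (∑ y : Fin T → A, seqProb μ y * (R y * ∑ t : Fin T,
          (π ((List.ofFn y).take t.val) (y t) / μ ((List.ofFn y).take t.val) (y t) - 1)))
      = ∑ y : Fin T → A, R y * (PIB.sp π [] y - PIB.sp μ [] y
          - PIB.sp μ [] y * ∑ t, PIB.b μ π [] y t) := by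
    rw [← Finset.sum_sub_distrib, ← Finset.sum_sub_distrib]
    refine Finset.sum_congr rfl fun y _ => ?_
    have h1 : PIB.sp π ([] : List A) y = seqProb π y := by simp [PIB.sp, seqProb]
    have h2 : PIB.sp μ ([] : List A) y = seqProb μ y := by simp [PIB.sp, seqProb]
    have h3 : ∀ t : Fin T, PIB.b μ π [] y t
        = π ((List.ofFn y).take t.val) (y t) / μ ((List.ofFn y).take t.val) (y t) - 1 :=
      fun t => by simp [PIB.b]
    rw [h1, h2, Finset.sum_congr rfl fun t _ => h3 t]
    ring
  have hlow := (abs_le.mp hkey).1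
  rw [← heq] at hlow
  linarith
end

section
/- (Linear-in-T error bound) Under the same setup as the policy improvement identity, the error term satisfies Δ(μ,π) ≤ 4ξ · E_{y∼μ}[ Σ_{t=1}^T D_TV( μ(·|s_t) ‖ π(·|s_t) ) ], where ξ = max_y |R(y)|. Consequently, J(π) − J(μ) ≥ L'(π) − 4ξ · E_{y∼μ}[ Σ_{t=1}^T D_TV( μ(·|s_t) ‖ π(·|s_t) ) ]. -/
open Finset

namespace LinHorizon

variable {A : Type*} [Fintype A]

def snocEquiv (n : ℕ) (A : Type*) : ((Fin n → A) × A) ≃ (Fin (n + 1) → A) where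
  toFun p := Fin.snoc p.1 p.2
  invFun y := (Fin.init y, y (Fin.last n))
  left_inv := by rintro ⟨y, a⟩; simp [Fin.init_snoc]
  right_inv := fun y => Fin.snoc_init_self y

omit [Fintype A] in
lemma ofFn_snoc {n : ℕ} (y : Fin n → A) (a : A) :
    List.ofFn (Fin.snoc y a : Fin (n + 1) → A) = List.ofFn y ++ [a] := by
  rw [List.ofFn_succ']
  simp [List.concat_eq_append]

lemma snoc_split (q : List A → A → ℝ) (F : List A → ℝ) (n : ℕ) :
    ∑ y : Fin (n + 1) → A,
        (∏ s : Fin (n + 1), q ((List.ofFn y).take s.val) (y s)) * F (List.ofFn y)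
      = ∑ y : Fin n → A, (∏ s : Fin n, q ((List.ofFn y).take s.val) (y s)) *
          ∑ a, q (List.ofFn y) a * F (List.ofFn y ++ [a]) := by
  rw [← Equiv.sum_comp (snocEquiv n A)
      (fun y => (∏ s : Fin (n + 1), q ((List.ofFn y).take s.val) (y s)) * F (List.ofFn y))]
  rw [Fintype.sum_prod_type]
  refine Finset.sum_congr rfl fun y _ => ?_
  rw [Finset.mul_sum]
  refine Finset.sum_congr rfl fun a _ => ?_
  have hy : ((snocEquiv n A) (y, a)) = Fin.snoc y a := rfl
  have hlen : (List.ofFn y).length = n := (List.length_ofFn : (List.ofFn y).length = _)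
  rw [hy, ofFn_snoc, Fin.prod_univ_castSucc]
  have h1 : ∀ s : Fin n,
      q ((List.ofFn y ++ [a]).take ((Fin.castSucc s) : Fin (n+1)).val)
        ((Fin.snoc y a : Fin (n+1) → A) (Fin.castSucc s))
      = q ((List.ofFn y).take s.val) (y s) := by
    intro s
    rw [Fin.snoc_castSucc]
    congr 1
    exact List.take_append_of_le_length (by omega)
  have h2 : q ((List.ofFn y ++ [a]).take ((Fin.last n) : Fin (n+1)).val)
      ((Fin.snoc y a : Fin (n+1) → A) (Fin.last n)) = q (List.ofFn y) a := by
    rw [Fin.snoc_last]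
    congr 1
    simp only [Fin.val_last]
    rw [List.take_append_of_le_length (by omega)]
    exact List.take_of_length_le (by omega)
  simp only [h1, h2]
  ring

lemma reduce (q : List A → A → ℝ) (k : ℕ)
    (hq : ∀ l : List A, k ≤ l.length → ∑ a, q l a = 1)
    (F : List A → ℝ) (hF : ∀ l : List A, F (l.take k) = F l) :
    ∀ n, k ≤ n →
      (∑ y : Fin n → A, (∏ s : Fin n, q ((List.ofFn y).take s.val) (y s)) * F (List.ofFn y))
      = ∑ y : Fin k → A, (∏ s : Fin k, q ((List.ofFn y).take s.val) (y s)) * F (List.ofFn y) := by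
  refine Nat.le_induction rfl fun n hn ih => ?_
  rw [snoc_split, ← ih]
  refine Finset.sum_congr rfl fun y _ => ?_
  have hlen : (List.ofFn y).length = n := (List.length_ofFn : (List.ofFn y).length = _)
  have hFa : ∀ a : A, F (List.ofFn y ++ [a]) = F (List.ofFn y) := by
    intro a
    rw [← hF (List.ofFn y ++ [a]), List.take_append_of_le_length (by omega), hF]
  simp only [hFa]
  rw [← Finset.sum_mul, hq (List.ofFn y) (by omega), one_mul]

def Efun (μ π : List A → A → ℝ) {T : ℕ} (t : Fin T) (y : Fin T → A) : ℝ :=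
  ∏ s ∈ Finset.univ.erase t,
    (if (s : ℕ) < (t : ℕ) then μ ((List.ofFn y).take (s : ℕ)) (y s)
     else π ((List.ofFn y).take (s : ℕ)) (y s))

lemma tele (μ π : List A → A → ℝ) {T : ℕ} (y : Fin T → A) :
    seqProb π y - seqProb μ y
      = ∑ t : Fin T,
          (π ((List.ofFn y).take (t : ℕ)) (y t) - μ ((List.ofFn y).take (t : ℕ)) (y t))
            * Efun μ π t y := by
  set H : ℕ → ℝ := fun j => ∏ s : Fin T,
      (if (s : ℕ) < j then μ ((List.ofFn y).take (s : ℕ)) (y s)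
       else π ((List.ofFn y).take (s : ℕ)) (y s)) with hH
  have key : ∑ j ∈ range T, (H (j + 1) - H j) = H T - H 0 := Finset.sum_range_sub H T
  have hT : H T = seqProb μ y := by
    simp only [hH]
    exact Finset.prod_congr rfl fun s _ => if_pos s.isLt
  have h0 : H 0 = seqProb π y := by
    simp only [hH]
    exact Finset.prod_congr rfl fun s _ => if_neg (Nat.not_lt_zero _)
  rw [← Fin.sum_univ_eq_sum_range (fun j => H (j + 1) - H j) T] at key
  have hstep : ∀ t : Fin T, H ((t : ℕ) + 1) - H (t : ℕ)
      = (μ ((List.ofFn y).take (t : ℕ)) (y t) - π ((List.ofFn y).take (t : ℕ)) (y t))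
          * Efun μ π t y := by
    intro t
    simp only [hH]
    rw [← Finset.mul_prod_erase _ _ (Finset.mem_univ t),
        ← Finset.mul_prod_erase _ _ (Finset.mem_univ t)]
    have hne : ∀ s : Fin T, s ∈ Finset.univ.erase t → (s : ℕ) ≠ (t : ℕ) := by
      intro s hs h
      exact (Finset.mem_erase.mp hs).1 (Fin.ext h)
    have h1 : (∏ s ∈ Finset.univ.erase t,
        (if (s : ℕ) < (t : ℕ) + 1 then μ ((List.ofFn y).take (s : ℕ)) (y s)
         else π ((List.ofFn y).take (s : ℕ)) (y s))) = Efun μ π t y := by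
      refine Finset.prod_congr rfl fun s hs => ?_
      have h := hne s hs
      by_cases hc : (s : ℕ) < (t : ℕ)
      · rw [if_pos (by omega), if_pos hc]
      · rw [if_neg (by omega), if_neg hc]
    have h2 : (∏ s ∈ Finset.univ.erase t,
        (if (s : ℕ) < (t : ℕ) then μ ((List.ofFn y).take (s : ℕ)) (y s)
         else π ((List.ofFn y).take (s : ℕ)) (y s))) = Efun μ π t y := rfl
    rw [if_pos (Nat.lt_succ_self _), if_neg (lt_irrefl _), h1, h2]
    ring
  rw [Finset.sum_congr rfl (fun t _ => hstep t), hT, h0] at key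
  have flip : ∑ t : Fin T,
      (π ((List.ofFn y).take (t : ℕ)) (y t) - μ ((List.ofFn y).take (t : ℕ)) (y t))
        * Efun μ π t y
      + ∑ t : Fin T,
      (μ ((List.ofFn y).take (t : ℕ)) (y t) - π ((List.ofFn y).take (t : ℕ)) (y t))
        * Efun μ π t y = 0 := by
    rw [← Finset.sum_add_distrib]
    exact Finset.sum_eq_zero fun t _ => by ring
  linarith

lemma lptw (μ π : List A → A → ℝ) (hμpos : ∀ (s : List A) (a : A), 0 < μ s a)
    {T : ℕ} (y : Fin T → A) (t : Fin T) :
    seqProb μ y * (π ((List.ofFn y).take (t : ℕ)) (y t) / μ ((List.ofFn y).take (t : ℕ)) (y t) - 1)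
      = (π ((List.ofFn y).take (t : ℕ)) (y t) - μ ((List.ofFn y).take (t : ℕ)) (y t)) *
          ∏ s ∈ Finset.univ.erase t, μ ((List.ofFn y).take (s : ℕ)) (y s) := by
  have hne : μ ((List.ofFn y).take (t : ℕ)) (y t) ≠ 0 := ne_of_gt (hμpos _ _)
  have hsp : seqProb μ y = μ ((List.ofFn y).take (t : ℕ)) (y t) *
      ∏ s ∈ Finset.univ.erase t, μ ((List.ofFn y).take (s : ℕ)) (y s) :=
    (Finset.mul_prod_erase _ _ (Finset.mem_univ t)).symm
  rw [hsp]
  field_simp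

end LinHorizon

open LinHorizon

/-- Linear-in-T error bound: `Δ(μ,π) ≤ 4ξ · E_{y∼μ}[Σ_t D_TV(μ(·|s_t) ‖ π(·|s_t))]`,
and consequently `J(π) − J(μ) ≥ L'(π) − 4ξ · E_{y∼μ}[Σ_t D_TV(μ(·|s_t) ‖ π(·|s_t))]`. -/
theorem linear_in_horizon_error_bound
    {A : Type*} [Fintype A] (T : ℕ) (μ π : List A → A → ℝ)
    (R : (Fin T → A) → ℝ) (ξ : ℝ)
    (hμ : IsPolicy μ) (hπ : IsPolicy π)
    (hμpos : ∀ (s : List A) (a : A), 0 < μ s a)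
    (hξ : ∀ y : Fin T → A, |R y| ≤ ξ) :
    ((∑ y : Fin T → A, seqProb μ y * (R y * ∑ t : Fin T,
          (π ((List.ofFn y).take t.val) (y t) / μ ((List.ofFn y).take t.val) (y t) - 1)))
        - ((∑ y : Fin T → A, seqProb π y * R y) - (∑ y : Fin T → A, seqProb μ y * R y))
      ≤ 4 * ξ * ∑ y : Fin T → A, seqProb μ y * ∑ t : Fin T,
          (1 / 2) * ∑ a, |μ ((List.ofFn y).take t.val) a - π ((List.ofFn y).take t.val) a|) ∧
    ((∑ y : Fin T → A, seqProb π y * R y) - (∑ y : Fin T → A, seqProb μ y * R y) ≥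
      (∑ y : Fin T → A, seqProb μ y * (R y * ∑ t : Fin T,
          (π ((List.ofFn y).take t.val) (y t) / μ ((List.ofFn y).take t.val) (y t) - 1)))
        - 4 * ξ * ∑ y : Fin T → A, seqProb μ y * ∑ t : Fin T,
            (1 / 2) * ∑ a, |μ ((List.ofFn y).take t.val) a - π ((List.ofFn y).take t.val) a|) := by
  classical
  have hμ0 : ∀ l a, 0 ≤ μ l a := fun l => (hμ l).1
  have hπ0 : ∀ l a, 0 ≤ π l a := fun l => (hπ l).1
  set W : Fin T → ℝ := fun t => ∑ y : Fin (t : ℕ) → A,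
      seqProb μ y * ∑ a, |π (List.ofFn y) a - μ (List.ofFn y) a| with hWdef
  set q1 : Fin T → List A → A → ℝ :=
    fun t l a => if l.length = (t : ℕ) then |π l a - μ l a| else μ l a with hq1
  set q2 : Fin T → List A → A → ℝ :=
    fun t l a => if l.length < (t : ℕ) then μ l a
      else if l.length = (t : ℕ) then |π l a - μ l a| else π l a with hq2
  -- Δ identity
  have L'eq : (∑ y : Fin T → A, seqProb μ y * (R y * ∑ t : Fin T,
        (π ((List.ofFn y).take t.val) (y t) / μ ((List.ofFn y).take t.val) (y t) - 1)))
      = ∑ y : Fin T → A, ∑ t : Fin T, R y *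
          ((π ((List.ofFn y).take t.val) (y t) - μ ((List.ofFn y).take t.val) (y t)) *
            ∏ s ∈ Finset.univ.erase t, μ ((List.ofFn y).take (s : ℕ)) (y s)) := by
    refine Finset.sum_congr rfl fun y _ => ?_
    rw [show seqProb μ y * (R y * ∑ t : Fin T,
        (π ((List.ofFn y).take t.val) (y t) / μ ((List.ofFn y).take t.val) (y t) - 1))
        = R y * ∑ t : Fin T, seqProb μ y *
          (π ((List.ofFn y).take t.val) (y t) / μ ((List.ofFn y).take t.val) (y t) - 1) by
      rw [← Finset.mul_sum]; ring]
    rw [Finset.mul_sum]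
    exact Finset.sum_congr rfl fun t _ => by rw [lptw μ π hμpos y t]
  have Jeq : (∑ y : Fin T → A, seqProb π y * R y) - (∑ y : Fin T → A, seqProb μ y * R y)
      = ∑ y : Fin T → A, ∑ t : Fin T, R y *
          ((π ((List.ofFn y).take t.val) (y t) - μ ((List.ofFn y).take t.val) (y t)) *
            Efun μ π t y) := by
    rw [← Finset.sum_sub_distrib]
    refine Finset.sum_congr rfl fun y _ => ?_
    have h := tele μ π y
    calc seqProb π y * R y - seqProb μ y * R y
        = (seqProb π y - seqProb μ y) * R y := by ring
      _ = (∑ t : Fin T,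
            (π ((List.ofFn y).take (t : ℕ)) (y t) - μ ((List.ofFn y).take (t : ℕ)) (y t))
              * Efun μ π t y) * R y := by rw [h]
      _ = _ := by
            rw [Finset.sum_mul]
            exact Finset.sum_congr rfl fun t _ => by ring
  have Deq : (∑ y : Fin T → A, seqProb μ y * (R y * ∑ t : Fin T,
        (π ((List.ofFn y).take t.val) (y t) / μ ((List.ofFn y).take t.val) (y t) - 1)))
        - ((∑ y : Fin T → A, seqProb π y * R y) - (∑ y : Fin T → A, seqProb μ y * R y))
      = ∑ y : Fin T → A, ∑ t : Fin T, R y *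
          ((π ((List.ofFn y).take t.val) (y t) - μ ((List.ofFn y).take t.val) (y t)) *
            ((∏ s ∈ Finset.univ.erase t, μ ((List.ofFn y).take (s : ℕ)) (y s))
              - Efun μ π t y)) := by
    rw [L'eq, Jeq, ← Finset.sum_sub_distrib]
    refine Finset.sum_congr rfl fun y _ => ?_
    rw [← Finset.sum_sub_distrib]
    exact Finset.sum_congr rfl fun t _ => by ring
  -- pointwise product identities
  have hlen_take : ∀ {n : ℕ} (y : Fin n → A) (s : Fin n),
      ((List.ofFn y).take (s : ℕ)).length = (s : ℕ) := by
    intro n y s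
    rw [List.length_take, List.length_ofFn]
    omega
  have hq1prod : ∀ (y : Fin T → A) (t : Fin T),
      (∏ s : Fin T, q1 t ((List.ofFn y).take (s : ℕ)) (y s))
      = |π ((List.ofFn y).take (t : ℕ)) (y t) - μ ((List.ofFn y).take (t : ℕ)) (y t)| *
          ∏ s ∈ Finset.univ.erase t, μ ((List.ofFn y).take (s : ℕ)) (y s) := by
    intro y t
    rw [← Finset.mul_prod_erase _ _ (Finset.mem_univ t)]
    congr 1
    · simp only [hq1]
      rw [if_pos (hlen_take y t)]
    · refine Finset.prod_congr rfl fun s hs => ?_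
      have h : (s : ℕ) ≠ (t : ℕ) := fun h => (Finset.mem_erase.mp hs).1 (Fin.ext h)
      simp only [hq1]
      rw [if_neg (by rw [hlen_take y s]; exact h)]
  have hq2prod : ∀ (y : Fin T → A) (t : Fin T),
      (∏ s : Fin T, q2 t ((List.ofFn y).take (s : ℕ)) (y s))
      = |π ((List.ofFn y).take (t : ℕ)) (y t) - μ ((List.ofFn y).take (t : ℕ)) (y t)| *
          Efun μ π t y := by
    intro y t
    rw [← Finset.mul_prod_erase _ _ (Finset.mem_univ t)]
    congr 1
    · simp only [hq2]
      rw [if_neg (by rw [hlen_take y t]; omega), if_pos (hlen_take y t)]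
    · refine Finset.prod_congr rfl fun s hs => ?_
      have h : (s : ℕ) ≠ (t : ℕ) := fun h => (Finset.mem_erase.mp hs).1 (Fin.ext h)
      simp only [hq2]
      by_cases hc : (s : ℕ) < (t : ℕ)
      · rw [if_pos (by rw [hlen_take y s]; exact hc), if_pos hc]
      · rw [if_neg (by rw [hlen_take y s]; exact hc),
            if_neg (by rw [hlen_take y s]; exact h), if_neg hc]
  -- sum reductions
  have hQ1sum : ∀ t : Fin T,
      (∑ y : Fin T → A, ∏ s : Fin T, q1 t ((List.ofFn y).take (s : ℕ)) (y s)) = W t := by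
    intro t
    have h1 := LinHorizon.reduce (A := A) (q1 t) ((t : ℕ) + 1)
      (fun l hl => by
        simp only [hq1]
        rw [show (∑ a, if l.length = (t : ℕ) then |π l a - μ l a| else μ l a)
            = ∑ a, μ l a from Finset.sum_congr rfl fun a _ => if_neg (by omega)]
        exact (hμ l).2)
      (fun _ => (1 : ℝ)) (fun l => rfl) T t.isLt
    have h2 := LinHorizon.snoc_split (A := A) (q1 t) (fun _ => (1 : ℝ)) (t : ℕ)
    simp only [mul_one] at h1 h2
    rw [h1, h2, hWdef]
    refine Finset.sum_congr rfl fun y _ => ?_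
    have hlen : (List.ofFn y).length = (t : ℕ) := (List.length_ofFn : (List.ofFn y).length = _)
    congr 1
    · refine Finset.prod_congr rfl fun s _ => ?_
      simp only [hq1]
      rw [if_neg (by rw [hlen_take y s]; omega)]
    · refine Finset.sum_congr rfl fun a _ => ?_
      simp only [hq1]
      rw [if_pos hlen]
  have hQ2sum : ∀ t : Fin T,
      (∑ y : Fin T → A, ∏ s : Fin T, q2 t ((List.ofFn y).take (s : ℕ)) (y s)) = W t := by
    intro t
    have h1 := LinHorizon.reduce (A := A) (q2 t) ((t : ℕ) + 1)
      (fun l hl => by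
        simp only [hq2]
        rw [show (∑ a, if l.length < (t : ℕ) then μ l a
            else if l.length = (t : ℕ) then |π l a - μ l a| else π l a)
            = ∑ a, π l a from Finset.sum_congr rfl fun a _ => by
              rw [if_neg (by omega), if_neg (by omega)]]
        exact (hπ l).2)
      (fun _ => (1 : ℝ)) (fun l => rfl) T t.isLt
    have h2 := LinHorizon.snoc_split (A := A) (q2 t) (fun _ => (1 : ℝ)) (t : ℕ)
    simp only [mul_one] at h1 h2
    rw [h1, h2, hWdef]
    refine Finset.sum_congr rfl fun y _ => ?_
    have hlen : (List.ofFn y).length = (t : ℕ) := (List.length_ofFn : (List.ofFn y).length = _)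
    congr 1
    · refine Finset.prod_congr rfl fun s _ => ?_
      simp only [hq2]
      rw [if_pos (by rw [hlen_take y s]; omega)]
    · refine Finset.sum_congr rfl fun a _ => ?_
      simp only [hq2]
      rw [if_neg (by omega), if_pos hlen]
  have hRHSred : ∀ t : Fin T,
      (∑ y : Fin T → A, seqProb μ y *
        ∑ a, |μ ((List.ofFn y).take (t : ℕ)) a - π ((List.ofFn y).take (t : ℕ)) a|) = W t := by
    intro t
    have h1 := LinHorizon.reduce (A := A) μ (t : ℕ) (fun l _ => (hμ l).2)
      (fun l => ∑ a, |μ (l.take (t : ℕ)) a - π (l.take (t : ℕ)) a|)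
      (fun l => by simp [List.take_take]) T (le_of_lt t.isLt)
    calc (∑ y : Fin T → A, seqProb μ y *
          ∑ a, |μ ((List.ofFn y).take (t : ℕ)) a - π ((List.ofFn y).take (t : ℕ)) a|)
        = ∑ y : Fin T → A, (∏ s : Fin T, μ ((List.ofFn y).take (s : ℕ)) (y s)) *
            ∑ a, |μ ((List.ofFn y).take (t : ℕ)) a - π ((List.ofFn y).take (t : ℕ)) a| := rfl
      _ = ∑ y : Fin (t : ℕ) → A, (∏ s : Fin (t : ℕ), μ ((List.ofFn y).take (s : ℕ)) (y s)) *
            ∑ a, |μ ((List.ofFn y).take (t : ℕ)) a - π ((List.ofFn y).take (t : ℕ)) a| := h1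
      _ = W t := by
          rw [hWdef]
          refine Finset.sum_congr rfl fun y _ => ?_
          have htake : (List.ofFn y).take (t : ℕ) = List.ofFn y :=
            List.take_of_length_le (le_of_eq ((List.length_ofFn : (List.ofFn y).length = _)))
          rw [htake]
          congr 1
          exact Finset.sum_congr rfl fun a _ => abs_sub_comm _ _
  -- the bound
  have bound : (∑ y : Fin T → A, ∑ t : Fin T, R y *
        ((π ((List.ofFn y).take t.val) (y t) - μ ((List.ofFn y).take t.val) (y t)) *
          ((∏ s ∈ Finset.univ.erase t, μ ((List.ofFn y).take (s : ℕ)) (y s))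
            - Efun μ π t y)))
      ≤ ∑ y : Fin T → A, ∑ t : Fin T,
          ((∏ s : Fin T, q1 t ((List.ofFn y).take (s : ℕ)) (y s)) * ξ +
           (∏ s : Fin T, q2 t ((List.ofFn y).take (s : ℕ)) (y s)) * ξ) := by
    refine Finset.sum_le_sum fun y _ => Finset.sum_le_sum fun t _ => ?_
    rw [hq1prod y t, hq2prod y t]
    have hξ0 : (0 : ℝ) ≤ ξ := le_trans (abs_nonneg _) (hξ y)
    have hprodM : (0 : ℝ) ≤ ∏ s ∈ Finset.univ.erase t, μ ((List.ofFn y).take (s : ℕ)) (y s) :=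
      Finset.prod_nonneg fun s _ => hμ0 _ _
    have hE : (0 : ℝ) ≤ Efun μ π t y := by
      unfold Efun
      refine Finset.prod_nonneg fun s _ => ?_
      split
      · exact hμ0 _ _
      · exact hπ0 _ _
    set d := π ((List.ofFn y).take (t : ℕ)) (y t) - μ ((List.ofFn y).take (t : ℕ)) (y t) with hd
    set pM := ∏ s ∈ Finset.univ.erase t, μ ((List.ofFn y).take (s : ℕ)) (y s) with hpM
    set e := Efun μ π t y with he
    calc R y * (d * (pM - e)) ≤ |R y * (d * (pM - e))| := le_abs_self _
      _ = |R y| * (|d| * |pM - e|) := by rw [abs_mul, abs_mul]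
      _ ≤ ξ * (|d| * |pM - e|) :=
          mul_le_mul_of_nonneg_right (hξ y) (by positivity)
      _ ≤ ξ * (|d| * (pM + e)) := by
          refine mul_le_mul_of_nonneg_left
            (mul_le_mul_of_nonneg_left ?_ (abs_nonneg _)) hξ0
          calc |pM - e| ≤ |pM| + |e| := abs_sub _ _
            _ = pM + e := by rw [abs_of_nonneg hprodM, abs_of_nonneg hE]
      _ = |d| * pM * ξ + |d| * e * ξ := by ring
  -- assemble
  have total : (∑ y : Fin T → A, ∑ t : Fin T,
        ((∏ s : Fin T, q1 t ((List.ofFn y).take (s : ℕ)) (y s)) * ξ +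
         (∏ s : Fin T, q2 t ((List.ofFn y).take (s : ℕ)) (y s)) * ξ))
      = ∑ t : Fin T, (W t * ξ + W t * ξ) := by
    rw [Finset.sum_comm]
    refine Finset.sum_congr rfl fun t _ => ?_
    rw [Finset.sum_add_distrib, ← Finset.sum_mul, ← Finset.sum_mul, hQ1sum t, hQ2sum t]
  have hRHS2 : (∑ y : Fin T → A, seqProb μ y * ∑ t : Fin T,
        (1 / 2) * ∑ a, |μ ((List.ofFn y).take t.val) a - π ((List.ofFn y).take t.val) a|)
      = ∑ t : Fin T, (1 / 2) * W t := by
    calc (∑ y : Fin T → A, seqProb μ y * ∑ t : Fin T,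
          (1 / 2) * ∑ a, |μ ((List.ofFn y).take t.val) a - π ((List.ofFn y).take t.val) a|)
        = ∑ y : Fin T → A, ∑ t : Fin T, seqProb μ y *
            ((1 / 2) * ∑ a, |μ ((List.ofFn y).take t.val) a - π ((List.ofFn y).take t.val) a|) :=
          Finset.sum_congr rfl fun y _ => by rw [Finset.mul_sum]
      _ = ∑ t : Fin T, ∑ y : Fin T → A, seqProb μ y *
            ((1 / 2) * ∑ a, |μ ((List.ofFn y).take t.val) a - π ((List.ofFn y).take t.val) a|) :=
          Finset.sum_comm
      _ = ∑ t : Fin T, (1 / 2) * ∑ y : Fin T → A, seqProb μ y *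
            ∑ a, |μ ((List.ofFn y).take t.val) a - π ((List.ofFn y).take t.val) a| := by
          refine Finset.sum_congr rfl fun t _ => ?_
          rw [Finset.mul_sum]
          exact Finset.sum_congr rfl fun y _ => by ring
      _ = ∑ t : Fin T, (1 / 2) * W t := by
          exact Finset.sum_congr rfl fun t _ => by rw [hRHSred t]
  have main : (∑ y : Fin T → A, seqProb μ y * (R y * ∑ t : Fin T,
        (π ((List.ofFn y).take t.val) (y t) / μ ((List.ofFn y).take t.val) (y t) - 1)))
        - ((∑ y : Fin T → A, seqProb π y * R y) - (∑ y : Fin T → A, seqProb μ y * R y))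
      ≤ 4 * ξ * ∑ y : Fin T → A, seqProb μ y * ∑ t : Fin T,
          (1 / 2) * ∑ a, |μ ((List.ofFn y).take t.val) a - π ((List.ofFn y).take t.val) a| := by
    rw [Deq, hRHS2]
    calc (∑ y : Fin T → A, ∑ t : Fin T, R y *
          ((π ((List.ofFn y).take t.val) (y t) - μ ((List.ofFn y).take t.val) (y t)) *
            ((∏ s ∈ Finset.univ.erase t, μ ((List.ofFn y).take (s : ℕ)) (y s))
              - Efun μ π t y)))
        ≤ ∑ y : Fin T → A, ∑ t : Fin T,
            ((∏ s : Fin T, q1 t ((List.ofFn y).take (s : ℕ)) (y s)) * ξ +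
             (∏ s : Fin T, q2 t ((List.ofFn y).take (s : ℕ)) (y s)) * ξ) := bound
      _ = ∑ t : Fin T, (W t * ξ + W t * ξ) := total
      _ = 4 * ξ * ∑ t : Fin T, (1 / 2) * W t := by
          rw [Finset.mul_sum]
          exact Finset.sum_congr rfl fun t _ => by ring
  exact ⟨main, by linarith⟩
end
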